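/- Corollary 2.1: let G be a connected finite simple graph, and suppose the decision function h has nonzero true positive rate (there exists u ∈ V with y(u) = 1 and h(u) = 1) and nonzero false positive rate (there exists u ∈ V with y(u) = 0 and h(u) = 1). Let V_c and V_{c'} be two nonempty subsets of V. Then h satisfies demographic parity for V_c and V_{c'} (i.e., |{v ∈ V_c : h(v) = 1}| / |V_c| = |{v ∈ V_{c'} : h(v) = 1}| / |V_{c'}|) if and only if there exists a positive integer k such that for every δ ≥ k, fairness visibility parity holds: FV_δ(V_c) = FV_δ(V_{c'}). -/
import Mathlib


open Finset

variable {V : Type*}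

open scoped Classical in
/-- The δ-neighborhood `N_δ(v)`: vertices `u` joined to `v` by a walk of some length
`k` with `1 ≤ k ≤ δ`. -/
noncomputable def deltaNbhd (G : SimpleGraph V) [Fintype V] (δ : ℕ) (v : V) : Finset V :=
  Finset.univ.filter fun u => ∃ p : G.Walk u v, 1 ≤ p.length ∧ p.length ≤ δ

/-- The δ-neighborhood peer expectation `E_h^δ(v)` (in `ℝ`, division by zero equals
zero, matching the stated convention). -/
noncomputable def peerExpDelta (G : SimpleGraph V) [Fintype V] (y h : V → ℕ)
    (δ : ℕ) (v : V) : ℝ :=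
  if y v = 1 then
    (∑ u ∈ deltaNbhd G δ v, (y u : ℝ) * (h u : ℝ)) /
      (∑ u ∈ deltaNbhd G δ v, (y u : ℝ))
  else
    (∑ u ∈ deltaNbhd G δ v, (1 - (y u : ℝ)) * (h u : ℝ)) /
      (∑ u ∈ deltaNbhd G δ v, (1 - (y u : ℝ)))

/-- The δ-neighborhood fairness perception `f_δ(v,h)`. -/
noncomputable def fairPercDelta (G : SimpleGraph V) [Fintype V] (y h : V → ℕ)
    (δ : ℕ) (v : V) : ℕ :=
  if peerExpDelta G y h δ v ≤ (h v : ℝ) then 1 else 0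

/-- The fairness visibility `FV_δ(S)` of a group `S` of vertices: the average
δ-neighborhood fairness perception over `S`. -/
noncomputable def fairVis (G : SimpleGraph V) [Fintype V] (y h : V → ℕ)
    (δ : ℕ) (S : Finset V) : ℝ :=
  (∑ v ∈ S, (fairPercDelta G y h δ v : ℝ)) / (S.card : ℝ)

open scoped Classical in
lemma deltaNbhd_eq_univ (G : SimpleGraph V) [Fintype V] (hconn : G.Connected)
    (hcard : 2 ≤ Fintype.card V) {δ : ℕ} (hδ : Fintype.card V ≤ δ) (v : V) :
    deltaNbhd G δ v = Finset.univ := by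
  ext u
  simp only [deltaNbhd, Finset.mem_filter, Finset.mem_univ, true_and, iff_true]
  by_cases huv : u = v
  · subst huv
    have : Nontrivial V := Fintype.one_lt_card_iff_nontrivial.mp hcard
    obtain ⟨w, hw⟩ := exists_ne u
    obtain ⟨p⟩ := hconn.preconnected u w
    cases p with
    | nil => exact absurd rfl hw.symm
    | cons hadj q =>
      refine ⟨SimpleGraph.Walk.cons hadj (SimpleGraph.Walk.cons hadj.symm SimpleGraph.Walk.nil),
        ?_, ?_⟩ <;> simp <;> omega
  · obtain ⟨p⟩ := hconn.preconnected u v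
    refine ⟨p.bypass, ?_, ?_⟩
    · rcases Nat.eq_zero_or_pos p.bypass.length with h0 | h1
      · exact absurd (SimpleGraph.Walk.eq_of_length_eq_zero h0) huv
      · exact h1
    · exact le_trans (p.bypass_isPath.length_lt).le (by omega)

open scoped Classical in
lemma fairPercDelta_eq_h (G : SimpleGraph V) [Fintype V] (hconn : G.Connected)
    (y h : V → ℕ) (hy : ∀ w, y w = 0 ∨ y w = 1) (hh : ∀ w, h w = 0 ∨ h w = 1)
    (hTPR : ∃ u : V, y u = 1 ∧ h u = 1) (hFPR : ∃ u : V, y u = 0 ∧ h u = 1)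
    {δ : ℕ} (hδ : Fintype.card V ≤ δ) (v : V) :
    fairPercDelta G y h δ v = h v := by
  obtain ⟨u₁, hy₁, hh₁⟩ := hTPR
  obtain ⟨u₂, hy₂, hh₂⟩ := hFPR
  have hne : u₁ ≠ u₂ := by intro e; rw [e, hy₂] at hy₁; exact one_ne_zero hy₁.symm
  have hcard : 2 ≤ Fintype.card V := Fintype.one_lt_card_iff_nontrivial.mpr ⟨u₁, u₂, hne⟩
  have hN : deltaNbhd G δ v = Finset.univ := deltaNbhd_eq_univ G hconn hcard hδ v
  have hE : 0 < peerExpDelta G y h δ v ∧ peerExpDelta G y h δ v ≤ 1 := by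
    unfold peerExpDelta
    rw [hN]
    by_cases hyv : y v = 1
    · rw [if_pos hyv]
      have hden : 0 < ∑ u : V, (y u : ℝ) :=
        Finset.sum_pos' (fun i _ => by positivity)
          ⟨u₁, Finset.mem_univ _, by rw [hy₁]; norm_num⟩
      have hnum : 0 < ∑ u : V, (y u : ℝ) * (h u : ℝ) :=
        Finset.sum_pos' (fun i _ => by positivity)
          ⟨u₁, Finset.mem_univ _, by rw [hy₁, hh₁]; norm_num⟩
      have hle : ∑ u : V, (y u : ℝ) * (h u : ℝ) ≤ ∑ u : V, (y u : ℝ) := by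
        refine Finset.sum_le_sum fun i _ => ?_
        rcases hh i with h0 | h1
        · rw [h0]; simp
        · rw [h1]; simp
      exact ⟨div_pos hnum hden, (div_le_one hden).mpr hle⟩
    · rw [if_neg hyv]
      have key : ∀ w : V, (0:ℝ) ≤ 1 - (y w : ℝ) := by
        intro w; rcases hy w with e | e <;> simp [e]
      have hden : 0 < ∑ u : V, (1 - (y u : ℝ)) :=
        Finset.sum_pos' (fun i _ => key i)
          ⟨u₂, Finset.mem_univ _, by rw [hy₂]; norm_num⟩
      have hnum : 0 < ∑ u : V, (1 - (y u : ℝ)) * (h u : ℝ) :=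
        Finset.sum_pos' (fun i _ => by
            rcases hy i with e | e <;> rcases hh i with f | f <;>
              simp [e, f])
          ⟨u₂, Finset.mem_univ _, by rw [hy₂, hh₂]; norm_num⟩
      have hle : ∑ u : V, (1 - (y u : ℝ)) * (h u : ℝ) ≤ ∑ u : V, (1 - (y u : ℝ)) := by
        refine Finset.sum_le_sum fun i _ => ?_
        rcases hh i with h0 | h1
        · rw [h0]; simpa using key i
        · rw [h1]; simp
      exact ⟨div_pos hnum hden, (div_le_one hden).mpr hle⟩
  rcases hh v with hv0 | hv1
  · rw [hv0]
    unfold fairPercDelta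
    rw [if_neg]
    rw [hv0]
    push_cast
    exact not_le.mpr hE.1
  · rw [hv1]
    unfold fairPercDelta
    rw [if_pos]
    rw [hv1]
    push_cast
    exact hE.2

open scoped Classical in
lemma fairVis_eq_ratio (G : SimpleGraph V) [Fintype V] (hconn : G.Connected)
    (y h : V → ℕ) (hy : ∀ w, y w = 0 ∨ y w = 1) (hh : ∀ w, h w = 0 ∨ h w = 1)
    (hTPR : ∃ u : V, y u = 1 ∧ h u = 1) (hFPR : ∃ u : V, y u = 0 ∧ h u = 1)
    {δ : ℕ} (hδ : Fintype.card V ≤ δ) (S : Finset V) :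
    fairVis G y h δ S = ((S.filter fun v => h v = 1).card : ℝ) / (S.card : ℝ) := by
  unfold fairVis
  congr 1
  rw [Finset.card_filter]
  push_cast
  refine Finset.sum_congr rfl fun v _ => ?_
  rw [fairPercDelta_eq_h G hconn y h hy hh hTPR hFPR hδ v]
  rcases hh v with h0 | h1
  · simp [h0]
  · simp [h1]

/-- Corollary 2.1: In a connected graph, if the decision function has
nonzero true positive and false positive rates, then `h` satisfies demographic parity
for two nonempty groups `Vc` and `Vc'` if and only if there exists a positive integer
`k` such that fairness visibility parity holds for every `δ ≥ k`. -/
theorem demographicParity_iff_fairVisParity (G : SimpleGraph V) [Fintype V]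
    (hconn : G.Connected)
    (y h : V → ℕ)
    (hy : ∀ w, y w = 0 ∨ y w = 1)
    (hh : ∀ w, h w = 0 ∨ h w = 1)
    (hTPR : ∃ u : V, y u = 1 ∧ h u = 1)
    (hFPR : ∃ u : V, y u = 0 ∧ h u = 1)
    (Vc Vc' : Finset V) (hVc : Vc.Nonempty) (hVc' : Vc'.Nonempty) :
    ((Vc.filter fun v => h v = 1).card : ℝ) / (Vc.card : ℝ) =
        ((Vc'.filter fun v => h v = 1).card : ℝ) / (Vc'.card : ℝ) ↔
      ∃ k : ℕ, 0 < k ∧ ∀ δ : ℕ, k ≤ δ →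
        fairVis G y h δ Vc = fairVis G y h δ Vc' := by
  have hcard : 2 ≤ Fintype.card V := by
    obtain ⟨u₁, hy₁, _⟩ := hTPR
    obtain ⟨u₂, hy₂, _⟩ := hFPR
    have hne : u₁ ≠ u₂ := by intro e; rw [e, hy₂] at hy₁; exact one_ne_zero hy₁.symm
    exact Fintype.one_lt_card_iff_nontrivial.mpr ⟨u₁, u₂, hne⟩
  constructor
  · intro hDP
    refine ⟨Fintype.card V, by omega, fun δ hδ => ?_⟩
    rw [fairVis_eq_ratio G hconn y h hy hh hTPR hFPR hδ,
      fairVis_eq_ratio G hconn y h hy hh hTPR hFPR hδ]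
    exact hDP
  · rintro ⟨k, hk, hall⟩
    have hδ1 : k ≤ max k (Fintype.card V) := le_max_left _ _
    have hδ2 : Fintype.card V ≤ max k (Fintype.card V) := le_max_right _ _
    have := hall _ hδ1
    rwa [fairVis_eq_ratio G hconn y h hy hh hTPR hFPR hδ2,
      fairVis_eq_ratio G hconn y h hy hh hTPR hFPR hδ2] at this
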